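/- In the A_2 setting, write s ∈ closure(𝔞_+) for the solution of ∇h(s) = δ h(s) where h = ∑_{μ∈W_0λ_1∪W_0λ_2} e^μ and δ ∈ closure(𝔞_+) with |δ| < 1. If ⟨λ_1,s⟩ ≥ ⟨λ_2,s⟩, then δ_1 ≥ δ_2, where δ_i = ⟨δ, α_i⟩ for the simple roots α_1, α_2. -/

import Mathlib

open scoped RealInnerProductSpace
open Real

/-- `A_2` setting: `α₁, α₂` are the simple roots (norm² = 2, inner product `-1`),
`λ₁, λ₂` the fundamental weights (`⟨λ_i, α_j⟩ = δ_ij`), and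
`h = ∑_{μ ∈ W₀λ₁ ∪ W₀λ₂} e^μ`. If `s ∈ closure(𝔞₊)` solves `∇h(s) = δ·h(s)` for
`δ ∈ closure(𝔞₊)` with `|δ| = δ₁ + δ₂ < 1`, and `⟨λ₁,s⟩ ≥ ⟨λ₂,s⟩`, then `δ₁ ≥ δ₂`,
where `δ_i = ⟨δ, α_i⟩`. -/
theorem stmt_5 {E : Type*} [NormedAddCommGroup E] [InnerProductSpace ℝ E]
    [FiniteDimensional ℝ E] (hdim : Module.finrank ℝ E = 2)
    (α1 α2 lam1 lam2 : E)
    (hα11 : ⟪α1, α1⟫ = 2) (hα22 : ⟪α2, α2⟫ = 2) (hα12 : ⟪α1, α2⟫ = -1)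
    (hl11 : ⟪lam1, α1⟫ = 1) (hl12 : ⟪lam1, α2⟫ = 0)
    (hl21 : ⟪lam2, α1⟫ = 0) (hl22 : ⟪lam2, α2⟫ = 1)
    (h : E → ℝ)
    (hh : ∀ u, h u = exp ⟪lam1, u⟫ + exp ⟪lam2 - lam1, u⟫ + exp ⟪-lam2, u⟫
        + exp ⟪lam2, u⟫ + exp ⟪lam1 - lam2, u⟫ + exp ⟪-lam1, u⟫)
    (δ s : E)
    (hδ1 : 0 ≤ ⟪δ, α1⟫) (hδ2 : 0 ≤ ⟪δ, α2⟫) (hδ : ⟪δ, α1⟫ + ⟪δ, α2⟫ < 1)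
    (hs1 : 0 ≤ ⟪α1, s⟫) (hs2 : 0 ≤ ⟪α2, s⟫)
    (heq : gradient h s = h s • δ)
    (hord : ⟪lam2, s⟫ ≤ ⟪lam1, s⟫) :
    ⟪δ, α2⟫ ≤ ⟪δ, α1⟫ := by
  -- gradient of h at s
  have hfun : h = fun u : E => exp ⟪lam1, u⟫ + exp ⟪lam2 - lam1, u⟫ + exp ⟪-lam2, u⟫
      + exp ⟪lam2, u⟫ + exp ⟪lam1 - lam2, u⟫ + exp ⟪-lam1, u⟫ := funext hh
  have hF : ∀ v : E, HasFDerivAt (fun u : E => exp ⟪v, u⟫)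
      (exp ⟪v, s⟫ • (innerSL ℝ v)) s := fun v => ((innerSL ℝ v).hasFDerivAt).exp
  have hg : HasGradientAt h
      (exp ⟪lam1, s⟫ • lam1 + exp ⟪lam2 - lam1, s⟫ • (lam2 - lam1)
        + exp ⟪-lam2, s⟫ • (-lam2) + exp ⟪lam2, s⟫ • lam2
        + exp ⟪lam1 - lam2, s⟫ • (lam1 - lam2) + exp ⟪-lam1, s⟫ • (-lam1)) s := by
    rw [hasGradientAt_iff_hasFDerivAt, hfun]
    have := (((((hF lam1).add (hF (lam2 - lam1))).add (hF (-lam2))).add (hF lam2)).add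
        (hF (lam1 - lam2))).add (hF (-lam1))
    refine this.congr_fderiv ?_
    ext u
    simp [InnerProductSpace.toDual_apply_apply, inner_add_left, inner_smul_left, real_inner_smul_left]
  have hkey : exp ⟪lam1, s⟫ • lam1 + exp ⟪lam2 - lam1, s⟫ • (lam2 - lam1)
        + exp ⟪-lam2, s⟫ • (-lam2) + exp ⟪lam2, s⟫ • lam2
        + exp ⟪lam1 - lam2, s⟫ • (lam1 - lam2) + exp ⟪-lam1, s⟫ • (-lam1)
      = h s • δ := by rw [← hg.gradient, heq]
  set a := ⟪lam1, s⟫ with ha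
  set b := ⟪lam2, s⟫ with hb
  have hba : ⟪lam2 - lam1, s⟫ = b - a := by rw [inner_sub_left]
  have hab : ⟪lam1 - lam2, s⟫ = a - b := by rw [inner_sub_left]
  have hna : ⟪-lam1, s⟫ = -a := by rw [inner_neg_left]
  have hnb : ⟪-lam2, s⟫ = -b := by rw [inner_neg_left]
  have e1 : exp a - exp (b - a) + exp (a - b) - exp (-a) = h s * ⟪δ, α1⟫ := by
    have := congrArg (fun x : E => ⟪x, α1⟫) hkey
    simpa [hba, hab, hna, hnb, inner_add_left, inner_sub_left, inner_neg_left,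
      real_inner_smul_left, hl11, hl12, hl21, hl22, real_inner_smul_left, ← sub_eq_add_neg] using this
  have e2 : exp (b - a) - exp (-b) + exp b - exp (a - b) = h s * ⟪δ, α2⟫ := by
    have := congrArg (fun x : E => ⟪x, α2⟫) hkey
    simpa [hba, hab, hna, hnb, inner_add_left, inner_sub_left, inner_neg_left,
      real_inner_smul_left, hl11, hl12, hl21, hl22, ← sub_eq_add_neg] using this
  have hspos : 0 < h s := by
    rw [hh s]; positivity
  have hab0 : 0 ≤ a - b := by linarith
  have key : 0 ≤ h s * (⟪δ, α1⟫ - ⟪δ, α2⟫) := by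
    have h1 : exp b ≤ exp a := exp_le_exp.2 hord
    have h2 : exp (-a) ≤ exp (-b) := exp_le_exp.2 (by linarith)
    have h3 : exp (b - a) ≤ exp (a - b) := exp_le_exp.2 (by linarith)
    rw [mul_sub]
    linarith [e1, e2, h1, h2, h3]
  have := (mul_nonneg_iff_of_pos_left hspos).1 key
  linarith
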